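/- Let u ∈ L²(D,ρ), let V be a finite-dimensional subspace, P the L²(D,ρ)-orthogonal projection onto V, and let ‖·‖_n be a seminorm arising from an inner product on functions such that ‖v‖_n² ≥ (1/2)‖v‖² for all v ∈ V. Let ũ ∈ V be the minimizer of ‖u - v‖_n over v ∈ V. Then ‖u - ũ‖² ≤ ‖u - Pu‖² + 2·‖u - Pu‖_n². -/

import Mathlib

open scoped RealInnerProductSpace

lemma bilin_sub_expand {E : Type*} [NormedAddCommGroup E] [InnerProductSpace ℝ E]
    (B : E →ₗ[ℝ] E →ₗ[ℝ] ℝ) (x y : E) (h2 : B x y = 0) (h3 : B y x = 0) :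
    B (x - y) (x - y) = B x x + B y y := by
  simp only [map_sub, LinearMap.sub_apply, h2, h3]
  ring

theorem instance_optimality {E : Type*} [NormedAddCommGroup E]
    [InnerProductSpace ℝ E] (K : Submodule ℝ E) [K.HasOrthogonalProjection]
    (B : E →ₗ[ℝ] E →ₗ[ℝ] ℝ)
    (hsymm : ∀ a b : E, B a b = B b a)
    (hpos : ∀ a : E, 0 ≤ B a a)
    (hstab : ∀ v ∈ K, (1 / 2) * ‖v‖ ^ 2 ≤ B v v)
    (u : E) (ut : E) (hutK : ut ∈ K)
    (hmin : ∀ v ∈ K, B (u - ut) (u - ut) ≤ B (u - v) (u - v)) :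
    ‖u - ut‖ ^ 2 ≤ ‖u - (K.orthogonalProjectionOnto u : E)‖ ^ 2 +
      2 * B (u - (K.orthogonalProjectionOnto u : E)) (u - (K.orthogonalProjectionOnto u : E)) := by
  set P : E := (K.orthogonalProjectionOnto u : E) with hP
  have hPK : P ∈ K := (K.orthogonalProjectionOnto u).2
  -- B-orthogonality of the residual against K
  have horth : ∀ w ∈ K, B (u - ut) w = 0 := by
    intro w hw
    set a := u - ut with ha
    set c := B a w with hc
    set d := B w w with hd'
    have hd : 0 ≤ d := hpos w
    have key : ∀ t : ℝ, 0 ≤ -2 * t * c + t ^ 2 * d := by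
      intro t
      have hv : ut + t • w ∈ K := K.add_mem hutK (K.smul_mem t hw)
      have hm := hmin _ hv
      have heq : u - (ut + t • w) = a - t • w := by rw [ha]; abel
      rw [heq] at hm
      have hwa : B w a = c := by rw [hc, hsymm]
      have hexp : B (a - t • w) (a - t • w) = B a a - 2 * t * c + t ^ 2 * d := by
        simp only [map_sub, map_smul, LinearMap.sub_apply, LinearMap.smul_apply,
          smul_eq_mul, hwa]
        rw [← hc, ← hd']
        ring
      rw [hexp] at hm
      linarith
    have hd1 : (0:ℝ) < d + 1 := by linarith
    have hne : d + 1 ≠ 0 := hd1.ne'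
    have ht := key (c / (d + 1))
    have hexp2 : (d + 1) ^ 2 * (-2 * (c / (d + 1)) * c + (c / (d + 1)) ^ 2 * d)
        = -2 * c ^ 2 * (d + 1) + c ^ 2 * d := by
      field_simp
    have hmm : 0 ≤ (d + 1) ^ 2 * (-2 * (c / (d + 1)) * c + (c / (d + 1)) ^ 2 * d) :=
      mul_nonneg (sq_nonneg _) ht
    rw [hexp2] at hmm
    have h4 : c ^ 2 ≤ 0 := by nlinarith [sq_nonneg c]
    have h5 : c ^ 2 = 0 := le_antisymm h4 (sq_nonneg c)
    exact pow_eq_zero_iff two_ne_zero |>.mp h5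
  have hKsub : P - ut ∈ K := K.sub_mem hPK hutK
  have h2 : B (u - ut) (P - ut) = 0 := horth _ hKsub
  have h3 : B (P - ut) (u - ut) = 0 := by rw [hsymm]; exact h2
  have hsplit : B (u - P) (u - P) = B (u - ut) (u - ut) + B (P - ut) (P - ut) := by
    have h1 : u - P = (u - ut) - (P - ut) := by abel
    rw [h1, bilin_sub_expand B _ _ h2 h3]
  have hBpos := hpos (u - ut)
  have hBle : B (P - ut) (P - ut) ≤ B (u - P) (u - P) := by linarith
  have hstabPu : (1 / 2) * ‖P - ut‖ ^ 2 ≤ B (P - ut) (P - ut) := hstab _ hKsub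
  have hinner : ⟪u - P, P - ut⟫ = 0 :=
    by have := K.starProjection_inner_eq_zero u (P - ut) hKsub; rwa [Submodule.starProjection_apply] at this
  have hpyth : ‖u - ut‖ ^ 2 = ‖u - P‖ ^ 2 + ‖P - ut‖ ^ 2 := by
    have hsum : u - ut = (u - P) + (P - ut) := by abel
    rw [hsum, norm_add_sq_real, hinner]
    ring
  linarith
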